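/- arXiv:1802.02907 — 2 statements merged into one kernel-verified Lean document; each statement's English description precedes it below -/
import Mathlib

section
/- Fix w ∈ ℝ^p, b ∈ ℝ, training samples (x_n, y_n) ∈ ℝ^p × {−1, +1} for n = 1, …, N, and constants A > 0, C_a ≥ 0, C > 0. Let U₀ = {δ ∈ ℝ^p : ‖δ‖₂² ≤ C}, and let U ⊆ (ℝ^p)^N be any set with U⁻ ⊆ U ⊆ U⁺, where U⁻ = ⋃_{t=1}^N {(δ₁, …, δ_N) : δ_t ∈ U₀ and δ_i = 0 for all i ≠ t} and U⁺ = {(α₁δ₁, …, α_Nδ_N) : Σ_{i=1}^N α_i = 1, α_i ≥ 0, δ_i ∈ U₀ for all i}. Assume the data are non-separable by (w, b), i.e., there exists t ∈ {1, …, N} with y_t(wᵀx_t + b) < 0. Then sup over (δ₁, …, δ_N) ∈ U of [ A Σ_{n=1}^N [1 − y_n(wᵀ(x_n − δ_n) + b)]₊ − C_a Σ_{n=1}^N ‖δ_n‖₀ ] equals A Σ_{n=1}^N [1 − y_n(wᵀx_n + b)]₊ + sup over δ ∈ U₀ of [ A wᵀδ − C_a ‖δ‖₀ ]. -/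
open Finset

/-- Hinge function `[z]₊ = max(z, 0)`. -/
noncomputable def hinge (z : ℝ) : ℝ := max z 0

/-- ℓ0 "norm": number of nonzero coordinates, as a real number. -/
noncomputable def l0 {p : ℕ} (δ : Fin p → ℝ) : ℝ :=
  ((Finset.univ.filter (fun i => δ i ≠ 0)).card : ℝ)

/-- Atomic action set `U₀ = {δ : ‖δ‖₂² ≤ C}`. -/
def atomicSet (p : ℕ) (C : ℝ) : Set (Fin p → ℝ) :=
  {δ | ∑ i, (δ i) ^ 2 ≤ C}

/-- `U⁻`: perturbations supported on a single sample, drawn from `U₀`. -/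
def Uminus (p N : ℕ) (C : ℝ) : Set (Fin N → Fin p → ℝ) :=
  {d | ∃ t : Fin N, d t ∈ atomicSet p C ∧ ∀ i : Fin N, i ≠ t → d i = 0}

/-- `U⁺`: convex-combination-scaled perturbations from `U₀`. -/
def Uplus (p N : ℕ) (C : ℝ) : Set (Fin N → Fin p → ℝ) :=
  {d | ∃ (α : Fin N → ℝ) (δ : Fin N → Fin p → ℝ),
    (∑ i, α i = 1) ∧ (∀ i, 0 ≤ α i) ∧ (∀ i, δ i ∈ atomicSet p C) ∧
    ∀ i, d i = α i • δ i}

lemma hinge_nonneg (z : ℝ) : 0 ≤ hinge z := le_max_right _ _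
lemma hinge_add_le (a c : ℝ) : hinge (a + c) ≤ hinge a + hinge c :=
  max_le (add_le_add (le_max_left a 0) (le_max_left c 0))
    (add_nonneg (le_max_right a 0) (le_max_right c 0))
lemma hinge_of_nonneg {z : ℝ} (h : 0 ≤ z) : hinge z = z := max_eq_left h
lemma hinge_of_nonpos {z : ℝ} (h : z ≤ 0) : hinge z = 0 := max_eq_right h
lemma hinge_smul {c : ℝ} (hc : 0 ≤ c) (z : ℝ) : hinge (c * z) = c * hinge z := by
  unfold hinge
  rw [mul_max_of_nonneg _ _ hc, mul_zero]
lemma l0_nonneg {p : ℕ} (δ : Fin p → ℝ) : 0 ≤ l0 δ := Nat.cast_nonneg _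
lemma l0_zero {p : ℕ} : l0 (0 : Fin p → ℝ) = 0 := by simp [l0]
lemma l0_smul {p : ℕ} {c : ℝ} (hc : c ≠ 0) (δ : Fin p → ℝ) : l0 (c • δ) = l0 δ := by
  unfold l0
  congr 2
  ext i
  simp [Pi.smul_apply, smul_eq_mul, hc]

/-- Proposition 1: for any sublinear aggregated action set
`U⁻ ⊆ U ⊆ U⁺`, if the data are non-separable by `(w, b)`, the robust hinge-loss
maximization over `U` reduces to a single-perturbation problem over `U₀`. -/
theorem robust_hinge_sup_eq {p N : ℕ}
    (w : Fin p → ℝ) (b : ℝ)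
    (x : Fin N → Fin p → ℝ) (y : Fin N → ℝ)
    (hy : ∀ n, y n = 1 ∨ y n = -1)
    (A Ca C : ℝ) (hA : 0 < A) (hCa : 0 ≤ Ca) (hC : 0 < C)
    (U : Set (Fin N → Fin p → ℝ))
    (hUlow : Uminus p N C ⊆ U) (hUhigh : U ⊆ Uplus p N C)
    (hsep : ∃ t : Fin N, y t * ((∑ i, w i * x t i) + b) < 0) :
    sSup ((fun d : Fin N → Fin p → ℝ =>
        A * ∑ n, hinge (1 - y n * ((∑ i, w i * (x n i - d n i)) + b))
          - Ca * ∑ n, l0 (d n)) '' U)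
      =
    A * ∑ n, hinge (1 - y n * ((∑ i, w i * x n i) + b))
      + sSup ((fun δ : Fin p → ℝ =>
          A * (∑ i, w i * δ i) - Ca * l0 δ) '' atomicSet p C) := by
  classical
  set g : (Fin p → ℝ) → ℝ := fun δ => A * (∑ i, w i * δ i) - Ca * l0 δ with hgdef
  set F : (Fin N → Fin p → ℝ) → ℝ := fun d =>
    A * ∑ n, hinge (1 - y n * ((∑ i, w i * (x n i - d n i)) + b))
      - Ca * ∑ n, l0 (d n) with hFdef
  set ℓ : Fin N → ℝ := fun n => 1 - y n * ((∑ i, w i * x n i) + b) with hldef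
  set K : ℝ := A * ∑ n, hinge (ℓ n) with hKdef
  set S : Set ℝ := g '' atomicSet p C with hSdef
  -- basic facts
  have hy1 : ∀ n, y n * y n = 1 := by
    intro n; rcases hy n with h | h <;> simp [h]
  have hyne : ∀ n, y n ≠ 0 := by
    intro n; rcases hy n with h | h <;> simp [h]
  have h0atomic : (0 : Fin p → ℝ) ∈ atomicSet p C := by
    simp [atomicSet]; exact hC.le
  have hyδ : ∀ n (δ : Fin p → ℝ), δ ∈ atomicSet p C → (y n • δ) ∈ atomicSet p C := by
    intro n δ hδ
    have hsq : ∀ i, (y n * δ i) ^ 2 = (δ i) ^ 2 := by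
      intro i; rcases hy n with h | h <;> simp [h, mul_pow]
    simp only [atomicSet, Set.mem_setOf_eq, Pi.smul_apply, smul_eq_mul] at *
    calc (∑ i, (y n * δ i) ^ 2) = ∑ i, (δ i) ^ 2 :=
          Finset.sum_congr rfl fun i _ => hsq i
      _ ≤ C := hδ
  have hg0 : g 0 = 0 := by simp [hgdef, l0_zero]
  have hSne : S.Nonempty := ⟨g 0, Set.mem_image_of_mem _ h0atomic⟩
  -- bound each coordinate of an atomic vector
  have hcoord : ∀ δ ∈ atomicSet p C, ∀ i, |δ i| ≤ Real.sqrt C := by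
    intro δ hδ i
    have h1 : (δ i) ^ 2 ≤ C := by
      have := Finset.single_le_sum (f := fun j => (δ j) ^ 2)
        (fun j _ => sq_nonneg (δ j)) (Finset.mem_univ i)
      exact le_trans this hδ
    rw [← Real.sqrt_sq_eq_abs]
    exact Real.sqrt_le_sqrt h1
  have hSbdd : BddAbove S := by
    refine ⟨A * (Real.sqrt C * ∑ i, |w i|), ?_⟩
    rintro _ ⟨δ, hδ, rfl⟩
    have h1 : (∑ i, w i * δ i) ≤ Real.sqrt C * ∑ i, |w i| := by
      calc (∑ i, w i * δ i) ≤ ∑ i, |w i * δ i| :=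
            Finset.sum_le_sum fun i _ => le_abs_self _
        _ = ∑ i, |w i| * |δ i| := by simp [abs_mul]
        _ ≤ ∑ i, |w i| * Real.sqrt C :=
            Finset.sum_le_sum fun i _ =>
              mul_le_mul_of_nonneg_left (hcoord δ hδ i) (abs_nonneg _)
        _ = Real.sqrt C * ∑ i, |w i| := by rw [← Finset.sum_mul]; ring
    have h2 : 0 ≤ Ca * l0 δ := mul_nonneg hCa (l0_nonneg δ)
    have := mul_le_mul_of_nonneg_left h1 hA.le
    simp only [hgdef]
    linarith
  have hSsup_nonneg : 0 ≤ sSup S := by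
    have := le_csSup hSbdd (Set.mem_image_of_mem g h0atomic)
    rwa [hg0] at this
  have hgle : ∀ δ ∈ atomicSet p C, g δ ≤ sSup S := fun δ hδ =>
    le_csSup hSbdd (Set.mem_image_of_mem _ hδ)
  -- splitting the hinge argument
  have hsplit : ∀ n (v : Fin p → ℝ),
      (1 - y n * ((∑ i, w i * (x n i - v i)) + b))
        = ℓ n + y n * (∑ i, w i * v i) := by
    intro n v
    have h1 : (∑ i, w i * (x n i - v i))
        = (∑ i, w i * x n i) - (∑ i, w i * v i) := by
      rw [← Finset.sum_sub_distrib]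
      exact Finset.sum_congr rfl fun i _ => by ring
    rw [h1]; simp only [hldef]; ring
  -- upper bound: F d ≤ K + sSup S for all d ∈ U
  have hub : ∀ d ∈ U, F d ≤ K + sSup S := by
    intro d hd
    obtain ⟨α, δ, hα1, hα0, hδU, hdi⟩ := hUhigh hd
    have hαle1 : ∀ n, α n ≤ 1 := by
      intro n
      have := Finset.single_le_sum (f := α) (fun i _ => hα0 i) (Finset.mem_univ n)
      linarith
    have key : ∀ n, A * hinge (1 - y n * ((∑ i, w i * (x n i - d n i)) + b))
        - Ca * l0 (d n) ≤ A * hinge (ℓ n) + α n * sSup S := by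
      intro n
      rw [hsplit n (d n), hdi n]
      have hwd : (∑ i, w i * (α n • δ n) i) = α n * ∑ i, w i * δ n i := by
        rw [Finset.mul_sum]
        exact Finset.sum_congr rfl fun i _ => by
          simp [Pi.smul_apply, smul_eq_mul]; ring
      rw [hwd]
      set T : ℝ := ∑ i, w i * δ n i with hT
      rcases eq_or_lt_of_le (hα0 n) with h0 | hpos
      · rw [← h0]
        simp [l0_zero, hinge]
      · have hl0 : l0 (α n • δ n) = l0 (δ n) := l0_smul (ne_of_gt hpos) _
        rw [hl0]
        have h1 : hinge (ℓ n + y n * (α n * T)) ≤ hinge (ℓ n) + α n * hinge (y n * T) := by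
          have h2 : ℓ n + y n * (α n * T) = ℓ n + α n * (y n * T) := by ring
          rw [h2]
          calc hinge (ℓ n + α n * (y n * T))
              ≤ hinge (ℓ n) + hinge (α n * (y n * T)) := hinge_add_le _ _
            _ = hinge (ℓ n) + α n * hinge (y n * T) := by
                rw [hinge_smul (hα0 n)]
      -- δ' = y n • δ n
        have hδ' : (y n • δ n) ∈ atomicSet p C := hyδ n (δ n) (hδU n)
        have hl0' : l0 (y n • δ n) = l0 (δ n) := l0_smul (hyne n) _
        have hwδ' : (∑ i, w i * (y n • δ n) i) = y n * T := by
          rw [hT, Finset.mul_sum]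
          exact Finset.sum_congr rfl fun i _ => by
            simp [Pi.smul_apply, smul_eq_mul]; ring
        have hgδ' : A * (y n * T) - Ca * l0 (δ n) ≤ sSup S := by
          have := hgle _ hδ'
          simp only [hgdef] at this
          rwa [hwδ', hl0'] at this
        have hl0nn : 0 ≤ l0 (δ n) := l0_nonneg _
        rcases le_or_gt (y n * T) 0 with hc | hc
        · have h1' : hinge (ℓ n + y n * (α n * T)) ≤ hinge (ℓ n) := by
            have := h1
            rw [hinge_of_nonpos hc] at this
            linarith
          have hs0 : 0 ≤ α n * sSup S := mul_nonneg hpos.le hSsup_nonneg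
          have hCal0 : 0 ≤ Ca * l0 (δ n) := mul_nonneg hCa hl0nn
          nlinarith [mul_le_mul_of_nonneg_left h1' hA.le]
        · rw [hinge_of_nonneg hc.le] at h1
          have h4 : α n * (A * (y n * T)) - α n * (Ca * l0 (δ n)) ≤ α n * sSup S := by
            have := mul_le_mul_of_nonneg_left hgδ' hpos.le
            nlinarith
          have h5 : Ca * (α n * l0 (δ n)) ≤ Ca * l0 (δ n) := by
            have : α n * l0 (δ n) ≤ l0 (δ n) := by nlinarith [hαle1 n]
            exact mul_le_mul_of_nonneg_left this hCa
          nlinarith [mul_le_mul_of_nonneg_left h1 hA.le]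
    have hsum : F d = ∑ n, (A * hinge (1 - y n * ((∑ i, w i * (x n i - d n i)) + b))
        - Ca * l0 (d n)) := by
      rw [hFdef]
      simp [Finset.mul_sum, Finset.sum_sub_distrib]
    rw [hsum]
    calc (∑ n, (A * hinge (1 - y n * ((∑ i, w i * (x n i - d n i)) + b)) - Ca * l0 (d n)))
        ≤ ∑ n, (A * hinge (ℓ n) + α n * sSup S) :=
          Finset.sum_le_sum fun n _ => key n
      _ = K + sSup S := by
          rw [Finset.sum_add_distrib, ← Finset.sum_mul, hα1, hKdef, Finset.mul_sum]
          ring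
  -- nonemptiness of U
  have hU0 : (0 : Fin N → Fin p → ℝ) ∈ U := by
    obtain ⟨t, _⟩ := hsep
    exact hUlow ⟨t, h0atomic, fun i _ => rfl⟩
  have hF0 : F 0 = K := by
    simp only [hFdef, hKdef, hldef]
    simp [l0_zero]
  have himgne : ((fun d => F d) '' U).Nonempty := ⟨F 0, Set.mem_image_of_mem _ hU0⟩
  have himgbdd : BddAbove (F '' U) := by
    refine ⟨K + sSup S, ?_⟩
    rintro _ ⟨d, hd, rfl⟩
    exact hub d hd
  have hle1 : sSup (F '' U) ≤ K + sSup S := by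
    apply csSup_le himgne
    rintro _ ⟨d, hd, rfl⟩
    exact hub d hd
  have hKle : K ≤ sSup (F '' U) := by
    have := le_csSup himgbdd (Set.mem_image_of_mem F hU0)
    rwa [hF0] at this
  -- lower bound
  have hlb : ∀ s ∈ S, K + s ≤ sSup (F '' U) := by
    rintro _ ⟨δ, hδ, rfl⟩
    rcases le_or_gt 0 (∑ i, w i * δ i) with hwδ | hwδ
    · obtain ⟨t, ht⟩ := hsep
      have hℓt : 0 < ℓ t := by simp only [hldef]; linarith
      set d : Fin N → Fin p → ℝ := fun i => if i = t then y t • δ else 0 with hddef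
      have hdU : d ∈ U := by
        apply hUlow
        refine ⟨t, ?_, fun i hi => ?_⟩
        · simp only [hddef, if_pos rfl]
          exact hyδ t δ hδ
        · simp [hddef, hi]
      have hterm : ∀ n, hinge (1 - y n * ((∑ i, w i * (x n i - d n i)) + b))
          = hinge (ℓ n) + (if n = t then (∑ i, w i * δ i) else 0) := by
        intro n
        rw [hsplit n (d n)]
        by_cases h : n = t
        · subst h
          have hwd : (∑ i, w i * d n i) = y n * (∑ i, w i * δ i) := by
            simp only [hddef, if_pos rfl]
            rw [Finset.mul_sum]
            exact Finset.sum_congr rfl fun i _ => by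
              simp [Pi.smul_apply, smul_eq_mul]; ring
          rw [hwd, ← mul_assoc, hy1 n, one_mul, if_pos rfl]
          rw [hinge_of_nonneg (by linarith), hinge_of_nonneg hℓt.le]
        · have hwd : (∑ i, w i * d n i) = 0 := by simp [hddef, h]
          rw [hwd, if_neg h]
          simp
      have hl0n : ∀ n, l0 (d n) = if n = t then l0 δ else 0 := by
        intro n
        by_cases h : n = t
        · simp only [hddef, h, if_pos rfl]
          exact l0_smul (hyne t) δ
        · simp [hddef, h, l0_zero]
      have hFd : F d = K + g δ := by
        simp only [hFdef]
        rw [Finset.sum_congr rfl (fun n _ => hterm n),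
            Finset.sum_congr rfl (fun n _ => hl0n n),
            Finset.sum_add_distrib]
        simp only [Finset.sum_ite_eq', Finset.mem_univ, if_pos, hKdef, hgdef]
        ring
      have := le_csSup himgbdd (Set.mem_image_of_mem F hdU)
      rw [hFd] at this
      linarith
    · have hgδ : g δ ≤ 0 := by
        have h1 : A * (∑ i, w i * δ i) < 0 := mul_neg_of_pos_of_neg hA hwδ
        have h2 : 0 ≤ Ca * l0 δ := mul_nonneg hCa (l0_nonneg δ)
        simp only [hgdef]; linarith
      linarith
  have hle2 : K + sSup S ≤ sSup (F '' U) := by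
    have : sSup S ≤ sSup (F '' U) - K := by
      apply csSup_le hSne
      intro s hs
      linarith [hlb s hs]
    linarith
  have hmain : sSup (F '' U) = K + sSup S := le_antisymm hle1 hle2
  rw [hmain, hKdef]
end

section
/- Fix w ∈ ℝ^p, b ∈ ℝ, training samples (x_n, y_n) ∈ ℝ^p × {−1, +1} for n = 1, …, N, and constants A > 0, C_a ≥ 0, C > 0. Let U₀ = {δ ∈ ℝ^p : ‖δ‖₂² ≤ C} and U⁻ = ⋃_{t=1}^N {(δ₁, …, δ_N) : δ_t ∈ U₀ and δ_i = 0 for all i ≠ t}. Assume there exists t ∈ {1, …, N} with y_t(wᵀx_t + b) < 0. Then A Σ_{n=1}^N [1 − y_n(wᵀx_n + b)]₊ + sup over δ ∈ U₀ of [ A wᵀδ − C_a ‖δ‖₀ ] is less than or equal to sup over (δ₁, …, δ_N) ∈ U⁻ of [ A Σ_{n=1}^N [1 − y_n(wᵀ(x_n − δ_n) + b)]₊ − C_a Σ_{n=1}^N ‖δ_n‖₀ ]. -/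
open Finset

lemma hinge_le_abs (z : ℝ) : hinge z ≤ |z| :=
  max_le (le_abs_self z) (abs_nonneg z)

lemma abs_dot_le {p : ℕ} (w δ : Fin p → ℝ) {C : ℝ}
    (h : ∑ i, (δ i) ^ 2 ≤ C) :
    |∑ i, w i * δ i| ≤ Real.sqrt (∑ i, (w i) ^ 2) * Real.sqrt C := by
  have h1 : (∑ i, w i * δ i) ^ 2 ≤ (∑ i, (w i) ^ 2) * ∑ i, (δ i) ^ 2 :=
    Finset.sum_mul_sq_le_sq_mul_sq _ _ _
  have h2 : (∑ i, w i * δ i) ^ 2 ≤ (∑ i, (w i) ^ 2) * C := by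
    refine h1.trans (mul_le_mul_of_nonneg_left h ?_)
    exact Finset.sum_nonneg fun _ _ => sq_nonneg _
  calc |∑ i, w i * δ i| = Real.sqrt ((∑ i, w i * δ i) ^ 2) := (Real.sqrt_sq_eq_abs _).symm
    _ ≤ Real.sqrt ((∑ i, (w i) ^ 2) * C) := Real.sqrt_le_sqrt h2
    _ = Real.sqrt (∑ i, (w i) ^ 2) * Real.sqrt C :=
        Real.sqrt_mul (Finset.sum_nonneg fun _ _ => sq_nonneg _) _

/-- lower bound, Inequality (26) of Appendix A: attacking a single
misclassified sample suffices. -/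
theorem robust_hinge_lower_bound {p N : ℕ}
    (w : Fin p → ℝ) (b : ℝ)
    (x : Fin N → Fin p → ℝ) (y : Fin N → ℝ)
    (hy : ∀ n, y n = 1 ∨ y n = -1)
    (A Ca C : ℝ) (hA : 0 < A) (hCa : 0 ≤ Ca) (hC : 0 < C)
    (hsep : ∃ t : Fin N, y t * ((∑ i, w i * x t i) + b) < 0) :
    A * ∑ n, hinge (1 - y n * ((∑ i, w i * x n i) + b))
      + sSup ((fun δ : Fin p → ℝ =>
          A * (∑ i, w i * δ i) - Ca * l0 δ) '' atomicSet p C)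
      ≤
    sSup ((fun d : Fin N → Fin p → ℝ =>
        A * ∑ n, hinge (1 - y n * ((∑ i, w i * (x n i - d n i)) + b))
          - Ca * ∑ n, l0 (d n)) '' Uminus p N C) := by
  obtain ⟨t, ht⟩ := hsep
  have hyt : y t ≠ 0 := by rcases hy t with h | h <;> rw [h] <;> norm_num
  have hysq : ∀ n, (y n) ^ 2 = 1 := by
    intro n; rcases hy n with h | h <;> rw [h] <;> norm_num
  set g : (Fin N → Fin p → ℝ) → ℝ := fun d =>
      A * ∑ n, hinge (1 - y n * ((∑ i, w i * (x n i - d n i)) + b))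
        - Ca * ∑ n, l0 (d n) with hg
  set S := A * ∑ n, hinge (1 - y n * ((∑ i, w i * x n i) + b)) with hS
  -- boundedness of the RHS image
  have hbdd : BddAbove (g '' Uminus p N C) := by
    refine ⟨A * ∑ n, (|1 - y n * ((∑ i, w i * x n i) + b)| +
        Real.sqrt (∑ i, (w i) ^ 2) * Real.sqrt C), ?_⟩
    rintro z ⟨d, ⟨s, hs, hzero⟩, rfl⟩
    have key : ∀ n, hinge (1 - y n * ((∑ i, w i * (x n i - d n i)) + b)) ≤
        |1 - y n * ((∑ i, w i * x n i) + b)| +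
        Real.sqrt (∑ i, (w i) ^ 2) * Real.sqrt C := by
      intro n
      have harg : 1 - y n * ((∑ i, w i * (x n i - d n i)) + b)
          = (1 - y n * ((∑ i, w i * x n i) + b)) + y n * ∑ i, w i * d n i := by
        simp only [mul_sub]
        rw [Finset.sum_sub_distrib]
        ring
      have hdn : |∑ i, w i * d n i| ≤ Real.sqrt (∑ i, (w i) ^ 2) * Real.sqrt C := by
        by_cases hn : n = s
        · subst hn; exact abs_dot_le w _ hs
        · rw [hzero n hn]
          simp only [Pi.zero_apply, mul_zero, Finset.sum_const_zero, abs_zero]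
          positivity
      calc hinge (1 - y n * ((∑ i, w i * (x n i - d n i)) + b))
          ≤ |1 - y n * ((∑ i, w i * (x n i - d n i)) + b)| := hinge_le_abs _
        _ ≤ |1 - y n * ((∑ i, w i * x n i) + b)| + |y n * ∑ i, w i * d n i| := by
            rw [harg]; exact abs_add_le _ _
        _ ≤ |1 - y n * ((∑ i, w i * x n i) + b)| +
            Real.sqrt (∑ i, (w i) ^ 2) * Real.sqrt C := by
            have : |y n| = 1 := by rcases hy n with h | h <;> rw [h] <;> norm_num
            rw [abs_mul, this, one_mul]
            linarith [hdn]
    have h1 : A * ∑ n, hinge (1 - y n * ((∑ i, w i * (x n i - d n i)) + b)) ≤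
        A * ∑ n, (|1 - y n * ((∑ i, w i * x n i) + b)| +
          Real.sqrt (∑ i, (w i) ^ 2) * Real.sqrt C) :=
      mul_le_mul_of_nonneg_left (Finset.sum_le_sum fun n _ => key n) hA.le
    have h2 : 0 ≤ Ca * ∑ n, l0 (d n) :=
      mul_nonneg hCa (Finset.sum_nonneg fun n _ => l0_nonneg _)
    simp only [hg]
    linarith
  -- each LHS element is dominated
  have hdom : ∀ a ∈ (fun δ : Fin p → ℝ =>
      A * (∑ i, w i * δ i) - Ca * l0 δ) '' atomicSet p C,
      S + a ≤ sSup (g '' Uminus p N C) := by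
    rintro a ⟨δ, hδ, rfl⟩
    -- the one-sample attack
    set d : Fin N → Fin p → ℝ := fun n => if n = t then (fun i => y t * δ i) else 0 with hd
    have hdU : d ∈ Uminus p N C := by
      refine ⟨t, ?_, fun i hi => by simp [hd, hi]⟩
      simp only [hd, if_pos rfl, atomicSet, Set.mem_setOf_eq]
      calc ∑ i, (y t * δ i) ^ 2 = (y t) ^ 2 * ∑ i, (δ i) ^ 2 := by
            rw [Finset.mul_sum]; exact Finset.sum_congr rfl fun i _ => by ring
        _ = ∑ i, (δ i) ^ 2 := by rw [hysq t, one_mul]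
        _ ≤ C := hδ
    have hl0 : ∑ n, l0 (d n) = l0 δ := by
      rw [Finset.sum_eq_single t]
      · simp only [hd, if_pos rfl, l0]
        exact congrArg _ (congrArg Finset.card (Finset.filter_congr fun i _ => by simp [hyt]))
      · intro n _ hn; simp [hd, hn, l0_zero]
      · simp
    have hhinge : ∀ n, hinge (1 - y n * ((∑ i, w i * x n i) + b)) +
        (if n = t then ∑ i, w i * δ i else 0) ≤
        hinge (1 - y n * ((∑ i, w i * (x n i - d n i)) + b)) := by
      intro n
      by_cases hn : n = t
      · subst hn
        have harg : 1 - y n * ((∑ i, w i * (x n i - d n i)) + b)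
            = (1 - y n * ((∑ i, w i * x n i) + b)) + ∑ i, w i * δ i := by
          simp only [hd, if_pos rfl, mul_sub]
          rw [Finset.sum_sub_distrib]
          have : ∑ i, w i * (y n * δ i) = y n * ∑ i, w i * δ i := by
            rw [Finset.mul_sum]; exact Finset.sum_congr rfl fun i _ => by ring
          rw [this]
          have h2 := hysq n
          linear_combination (∑ i, w i * δ i) * h2
        have hpos : 0 < 1 - y n * ((∑ i, w i * x n i) + b) := by linarith
        rw [if_pos rfl, harg]
        have : hinge (1 - y n * ((∑ i, w i * x n i) + b))
            = 1 - y n * ((∑ i, w i * x n i) + b) := max_eq_left hpos.le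
        rw [this]
        exact le_max_left _ _
      · rw [if_neg hn]
        have : d n = 0 := by simp [hd, hn]
        rw [this]
        simp
    have hsum : (∑ n, hinge (1 - y n * ((∑ i, w i * x n i) + b))) + (∑ i, w i * δ i) ≤
        ∑ n, hinge (1 - y n * ((∑ i, w i * (x n i - d n i)) + b)) := by
      have := Finset.sum_le_sum (fun n (_ : n ∈ Finset.univ) => hhinge n)
      rwa [Finset.sum_add_distrib, Finset.sum_ite_eq' Finset.univ t
        (fun _ => ∑ i, w i * δ i), if_pos (Finset.mem_univ t)] at this
    have hval : S + (A * (∑ i, w i * δ i) - Ca * l0 δ) ≤ g d := by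
      simp only [hg, hS, hl0]
      nlinarith [hsum, hA.le]
    exact hval.trans (le_csSup hbdd ⟨d, hdU, rfl⟩)
  have hne : ((fun δ : Fin p → ℝ =>
      A * (∑ i, w i * δ i) - Ca * l0 δ) '' atomicSet p C).Nonempty := by
    refine ⟨_, ⟨0, ?_, rfl⟩⟩
    simp [atomicSet, hC.le]
  have : sSup ((fun δ : Fin p → ℝ =>
      A * (∑ i, w i * δ i) - Ca * l0 δ) '' atomicSet p C)
      ≤ sSup (g '' Uminus p N C) - S :=
    csSup_le hne fun a ha => by linarith [hdom a ha]
  linarith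
end
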